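/- Let ε > 0 and N ≥ 1. Define Ξ(x) = (3/(4ε³(3ε² − |x|²)))(10ε⁴ + 5Nε⁴ − 24ε²|x|² − 6Nε²|x|² + 6|x|⁴ + N|x|⁴) for |x| ≤ ε. Then −3/ε ≤ Ξ(x) ≤ 5(N+2)/(4ε) for all |x| ≤ ε. -/
import Mathlib


open Real Set

/-- Bounds on the scalar coefficient `Ξ` on `|x| ≤ ε`. -/
theorem xi_bounds {N : ℕ} (hN : 1 ≤ N) (ε : ℝ) (hε : 0 < ε)
    (x : EuclideanSpace ℝ (Fin N)) (hx : ‖x‖ ≤ ε) :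
    -3 / ε ≤ 3 / (4 * ε ^ 3 * (3 * ε ^ 2 - ‖x‖ ^ 2)) *
        (10 * ε ^ 4 + 5 * (N : ℝ) * ε ^ 4 - 24 * ε ^ 2 * ‖x‖ ^ 2
          - 6 * (N : ℝ) * ε ^ 2 * ‖x‖ ^ 2 + 6 * ‖x‖ ^ 4 + (N : ℝ) * ‖x‖ ^ 4) ∧
    3 / (4 * ε ^ 3 * (3 * ε ^ 2 - ‖x‖ ^ 2)) *
        (10 * ε ^ 4 + 5 * (N : ℝ) * ε ^ 4 - 24 * ε ^ 2 * ‖x‖ ^ 2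
          - 6 * (N : ℝ) * ε ^ 2 * ‖x‖ ^ 2 + 6 * ‖x‖ ^ 4 + (N : ℝ) * ‖x‖ ^ 4)
      ≤ 5 * ((N : ℝ) + 2) / (4 * ε) := by
  set r := ‖x‖ with hrdef
  have hr0 : 0 ≤ r := norm_nonneg x
  have hN1 : (1:ℝ) ≤ (N:ℝ) := by exact_mod_cast hN
  have hr2 : r ^ 2 ≤ ε ^ 2 := by nlinarith
  have h1 : 0 < 3 * ε ^ 2 - r ^ 2 := by nlinarith
  have hD : 0 < 4 * ε ^ 3 * (3 * ε ^ 2 - r ^ 2) :=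
    mul_pos (by positivity) h1
  constructor
  · rw [div_mul_eq_mul_div, div_le_div_iff₀ hε hD]
    nlinarith [mul_nonneg (sub_nonneg.2 hr2) (by nlinarith : 0 ≤ (22 + 5*(N:ℝ)) * ε ^ 2 - (6 + (N:ℝ)) * r ^ 2), pow_pos hε 2, sq_nonneg r]
  · rw [div_mul_eq_mul_div, div_le_div_iff₀ hD (by positivity : (0:ℝ) < 4 * ε)]
    nlinarith [mul_nonneg (sq_nonneg r) (by nlinarith : 0 ≤ (13*(N:ℝ) + 62) * ε ^ 2 - (3*(N:ℝ) + 18) * r ^ 2), pow_pos hε 2]
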